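/- Let p be an odd prime and C an integer with |C| < p/2 and p ∤ C. For any integer n with 2 ≤ n and n² < p, there exist integers r, s with 1 ≤ s ≤ n, |r| < p/n, gcd(r,s) = 1, (r,s) ≠ (0,0), and r ≡ C·s (mod p). -/

import Mathlib

theorem stmt_2 (p C n : ℤ) (hp : Prime p) (hodd : Odd p)
    (hC : 2 * |C| < p) (hpC : ¬ p ∣ C) (hn : 2 ≤ n) (hnp : n ^ 2 < p) :
    ∃ r s : ℤ, 1 ≤ s ∧ s ≤ n ∧ |r| * n < p ∧ Int.gcd r s = 1 ∧
      (r, s) ≠ (0, 0) ∧ p ∣ (r - C * s) := by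
  have hp0 : 0 < p := by nlinarith
  set f : ℤ → ℤ := fun s => ((C * s) % p) * n / p with hf
  have hmaps : ∀ s ∈ Finset.Icc (0:ℤ) n, f s ∈ Finset.Ico (0:ℤ) n := by
    intro s _
    have h1 : 0 ≤ (C * s) % p := Int.emod_nonneg _ hp0.ne'
    have h2 : (C * s) % p < p := Int.emod_lt_of_pos _ hp0
    simp only [Finset.mem_Ico, hf]
    refine ⟨Int.ediv_nonneg (by positivity) hp0.le, ?_⟩
    rw [Int.ediv_lt_iff_lt_mul hp0]
    nlinarith
  have hcard : (Finset.Ico (0:ℤ) n).card < (Finset.Icc (0:ℤ) n).card := by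
    rw [Int.card_Ico, Int.card_Icc]
    omega
  obtain ⟨x, hx, y, hy, hxy, hfeq⟩ :=
    Finset.exists_ne_map_eq_of_card_lt_of_maps_to hcard hmaps
  -- arrange a < b
  obtain ⟨a, b, ha, hb, hab, hfab⟩ : ∃ a b : ℤ, a ∈ Finset.Icc (0:ℤ) n ∧
      b ∈ Finset.Icc (0:ℤ) n ∧ a < b ∧ f a = f b := by
    rcases hxy.lt_or_gt with h | h
    · exact ⟨x, y, hx, hy, h, hfeq⟩
    · exact ⟨y, x, hy, hx, h, hfeq.symm⟩
  simp only [Finset.mem_Icc] at ha hb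
  set va : ℤ := (C * a) % p with hva
  set vb : ℤ := (C * b) % p with hvb
  set s : ℤ := b - a with hs
  set r0 : ℤ := vb - va with hr0
  have hs1 : 1 ≤ s := by omega
  have hsn : s ≤ n := by omega
  -- bound on r0
  have h1a : 0 ≤ va * n % p := Int.emod_nonneg _ hp0.ne'
  have h2a : va * n % p < p := Int.emod_lt_of_pos _ hp0
  have h1b : 0 ≤ vb * n % p := Int.emod_nonneg _ hp0.ne'
  have h2b : vb * n % p < p := Int.emod_lt_of_pos _ hp0
  have hda : va * n = p * (va * n / p) + va * n % p := (Int.mul_ediv_add_emod _ _).symm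
  have hdb : vb * n = p * (vb * n / p) + vb * n % p := (Int.mul_ediv_add_emod _ _).symm
  have hq : va * n / p = vb * n / p := hfab
  have hr0n : |r0 * n| < p := by
    rw [abs_lt]
    constructor <;> nlinarith
  have hr0abs : |r0| * n < p := by
    rwa [abs_mul, abs_of_nonneg (by omega : (0:ℤ) ≤ n)] at hr0n
  -- congruence: p ∣ r0 - C * s
  have hcong : p ∣ r0 - C * s := by
    refine ⟨C * a / p - C * b / p, ?_⟩
    have ea : va = C * a - p * (C * a / p) := by rw [hva, Int.emod_def]
    have eb : vb = C * b - p * (C * b / p) := by rw [hvb, Int.emod_def]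
    rw [hr0, hs, ea, eb]; ring
  clear_value r0 s
  clear hq hda hdb h1a h2a h1b h2b hfab hfeq hmaps hcard hf hr0 hs hr0n
  clear_value va vb
  -- reduce by gcd
  have hgnz : Int.gcd r0 s ≠ 0 := by
    simp only [Ne, Int.gcd_eq_zero_iff, not_and]
    intro _ h; omega
  set g : ℤ := (Int.gcd r0 s : ℤ) with hg
  have hgr : g ∣ r0 := Int.gcd_dvd_left _ _
  have hgs : g ∣ s := Int.gcd_dvd_right _ _
  have hg0 : 0 < g := by positivity
  have hgle : g ≤ s := Int.le_of_dvd (by omega) hgs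
  refine ⟨r0 / g, s / g, ?_, ?_, ?_, ?_, ?_, ?_⟩
  · have := Int.ediv_mul_cancel hgs
    nlinarith [Int.lt_iff_add_one_le.mp (show 0 < s / g from
      Int.ediv_pos_of_pos_of_dvd (by omega) hg0.le hgs)]
  · have h1 : s / g ≤ s := Int.ediv_le_self g (by omega : (0:ℤ) ≤ s)
    omega
  · have hrle : |r0 / g| ≤ |r0| := by
      rcases eq_or_ne g 0 with h0 | h0
      · simp [h0]
      · rcases hgr with ⟨k, hk⟩
        rw [hk, Int.mul_ediv_cancel_left _ h0, abs_mul]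
        have h1 : 1 ≤ |g| := Int.one_le_abs (by omega)
        nlinarith [abs_nonneg k]
    exact lt_of_le_of_lt (mul_le_mul_of_nonneg_right hrle (by omega)) hr0abs
  · exact Int.gcd_div_gcd_div_gcd (Nat.pos_of_ne_zero hgnz)
  · intro h
    have h2 := (Prod.mk.injEq _ _ _ _).mp h
    have : 0 < s / g := Int.ediv_pos_of_pos_of_dvd (by omega) hg0.le hgs
    omega
  · have key : g * (r0 / g - C * (s / g)) = r0 - C * s := by
      rw [mul_sub, Int.mul_ediv_cancel' hgr, mul_left_comm, Int.mul_ediv_cancel' hgs]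
    have hpg : ¬ p ∣ g := by
      intro hd
      have := Int.le_of_dvd hg0 hd
      nlinarith
    have h2 : p ∣ g * (r0 / g - C * (s / g)) := by rw [key]; exact hcong
    rcases hp.dvd_mul.mp h2 with h | h
    · exact absurd h hpg
    · exact h
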